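/- Staging set rule (SP): Let f be globally Lipschitz, S, P ⊆ ℝⁿ, p polynomial, ε > 0. Assume (i) for each solution φ from the initial state, for all t, if φ(s) ∉ P for all s ∈ [0,t], then φ(t) ∈ S; and (ii) for all y ∈ S, p(y) ≤ 0 and ∇p(y)·f(y) ≥ ε. Then the solution satisfies φ(τ) ∈ P for some τ ≥ 0. -/

import Mathlib

open MvPolynomial

lemma poly_chain {n : ℕ} (p : MvPolynomial (Fin n) ℝ) {φ : ℝ → (Fin n → ℝ)}
    {v : Fin n → ℝ} {t : ℝ} (hφ : HasDerivAt φ v t) :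
    HasDerivAt (fun s => eval (φ s) p) (∑ i : Fin n, eval (φ t) (pderiv i p) * v i) t := by
  induction p using MvPolynomial.induction_on with
  | C a => simpa using hasDerivAt_const t (a : ℝ)
  | add p q hp hq =>
      have h2 : HasDerivAt (fun s => eval (φ s) p + eval (φ s) q)
          (∑ i : Fin n, eval (φ t) (pderiv i p) * v i + ∑ i : Fin n, eval (φ t) (pderiv i q) * v i) t :=
        hp.add hq
      simpa [eval_add, add_mul, Finset.sum_add_distrib] using h2
  | mul_X q i hq =>
      have hcoord : HasDerivAt (fun s => φ s i) (v i) t :=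
        ((ContinuousLinearMap.proj (R := ℝ) (φ := fun _ : Fin n => ℝ) i).hasFDerivAt.comp_hasDerivAt
          t hφ)
      have : HasDerivAt (fun s => eval (φ s) q * φ s i)
          ((∑ j : Fin n, eval (φ t) (pderiv j q) * v j) * φ t i + eval (φ t) q * v i) t :=
        hq.mul hcoord
      convert this using 1
      · funext s; simp
      have key : ∀ j : Fin n, eval (φ t) (pderiv j (q * X i)) * v j
          = eval (φ t) (pderiv j q) * v j * φ t i
            + (if j = i then eval (φ t) q * v j else 0) := by
        intro j
        rcases eq_or_ne j i with rfl | hji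
        · simp [pderiv_mul]; ring
        · simp [pderiv_mul, hji]; ring
      rw [Finset.sum_congr rfl fun j _ => key j, Finset.sum_add_distrib,
        Finset.sum_ite_eq' Finset.univ i, ← Finset.sum_mul]
      simp


/-- Staging set rule SP: if the solution of the globally Lipschitz ODE stays in
the staging set `S` as long as it has not entered `P`, and on `S` the polynomial
`p` is nonpositive with Lie derivative at least `ε > 0`, then the solution
enters `P` at some finite time. -/
theorem staging_set_SP (n : ℕ) (f : (Fin n → ℝ) → (Fin n → ℝ)) (K : NNReal)
    (hf : LipschitzWith K f) (S P : Set (Fin n → ℝ))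
    (p : MvPolynomial (Fin n) ℝ) (ε : ℝ) (hε : 0 < ε)
    (φ : ℝ → (Fin n → ℝ)) (hsol : ∀ t : ℝ, 0 ≤ t → HasDerivAt φ (f (φ t)) t)
    (hstage : ∀ t : ℝ, 0 ≤ t → (∀ s ∈ Set.Icc (0:ℝ) t, φ s ∉ P) → φ t ∈ S)
    (hS : ∀ y ∈ S, eval y p ≤ 0 ∧ ε ≤ ∑ i : Fin n, eval y (pderiv i p) * f y i) :
    ∃ τ : ℝ, 0 ≤ τ ∧ φ τ ∈ P := by
  by_contra h
  push_neg at h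
  -- the solution stays in S forever
  have hmemS : ∀ t : ℝ, 0 ≤ t → φ t ∈ S := fun t ht =>
    hstage t ht (fun s hs => h s hs.1)
  set g : ℝ → ℝ := fun t => eval (φ t) p with hg
  set d : ℝ → ℝ := fun t => ∑ i : Fin n, eval (φ t) (pderiv i p) * f (φ t) i with hd
  have hderiv : ∀ t : ℝ, 0 ≤ t → HasDerivAt g (d t) t := fun t ht =>
    poly_chain p (hsol t ht)
  have hdge : ∀ t : ℝ, 0 ≤ t → ε ≤ d t := fun t ht => (hS _ (hmemS t ht)).2
  have hgle : ∀ t : ℝ, 0 ≤ t → g t ≤ 0 := fun t ht => (hS _ (hmemS t ht)).1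
  -- pick T large
  set T : ℝ := (1 - g 0) / ε with hT
  have hT0 : 0 < T := div_pos (by linarith [hgle 0 le_rfl]) hε
  have hmono : MonotoneOn (fun t => g t - ε * t) (Set.Icc (0:ℝ) T) := by
    apply monotoneOn_of_hasDerivWithinAt_nonneg (f' := fun t => d t - ε) (convex_Icc 0 T)
    · intro t ht
      exact ((hderiv t ht.1).sub ((hasDerivAt_id t).const_mul ε)).continuousAt.continuousWithinAt
    · intro t ht
      rw [interior_Icc] at ht
      have := (((hderiv t ht.1.le).sub ((hasDerivAt_id t).const_mul ε))).hasDerivWithinAt (s := Set.Ioo 0 T)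
      simp only [mul_one] at this
      rw [interior_Icc]
      exact this
    · intro t ht
      rw [interior_Icc] at ht
      linarith [hdge t ht.1.le]
  have := hmono (Set.left_mem_Icc.2 hT0.le) (Set.right_mem_Icc.2 hT0.le) hT0.le
  simp only [mul_zero, sub_zero] at this
  have hεT : ε * T = 1 - g 0 := by
    rw [hT]
    field_simp
  have := hgle T hT0.le
  linarith
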